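/- The formal Jacobian matrix (over ℤ[x_1,...,x_n]) and the log-matrix of a finite set F of monomials have the same set of positions of zero minors; in particular they have the same rank. -/

import Mathlib

universe u
open MvPolynomial Submodule Module Matrix

private lemma li_map_field {L K : Type*} [Field L] [Field K] (f : L →+* K)
    {m ι : Type*} [Fintype m] [Fintype ι] {u : ι → m → L}
    (hu : LinearIndependent L u) : LinearIndependent K (fun j => f ∘ u j) := by
  classical
  set N : Matrix m ι L := Matrix.of fun i j => u j i with hN
  have hker : LinearMap.ker N.mulVecLin = ⊥ := by
    rw [LinearMap.ker_eq_bot']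
    intro x hx
    rw [Fintype.linearIndependent_iff] at hu
    funext j
    refine hu x ?_ j
    funext i
    have := congrFun hx i
    simpa [Matrix.mulVecLin, Matrix.mulVec, dotProduct, hN, mul_comm] using this
  obtain ⟨g, hg⟩ := N.mulVecLin.exists_leftInverse_of_injective hker
  set B := LinearMap.toMatrix' g with hB
  have hBN : B * N = 1 := by
    have h1 : LinearMap.toMatrix' (Matrix.mulVecLin N) = N := by
      rw [← Matrix.toLin'_apply', LinearMap.toMatrix'_toLin']
    calc B * N = LinearMap.toMatrix' g * LinearMap.toMatrix' N.mulVecLin := by rw [h1]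
    _ = LinearMap.toMatrix' (g ∘ₗ N.mulVecLin) := (LinearMap.toMatrix'_comp _ _).symm
    _ = 1 := by rw [hg, LinearMap.toMatrix'_id]
  rw [Fintype.linearIndependent_iff]
  intro c hc jj
  have h0 : (N.map f).mulVec c = 0 := by
    funext i
    have := congrFun hc i
    simpa [Matrix.mulVec, dotProduct, hN, mul_comm, Finset.sum_apply] using this
  have : (B.map f).mulVec ((N.map f).mulVec c) = c := by
    rw [Matrix.mulVec_mulVec, ← Matrix.map_mul, hBN, Matrix.map_one f (map_zero f) (map_one f),
      Matrix.one_mulVec]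
  rw [h0, Matrix.mulVec_zero] at this
  exact (congrFun this jj).symm

/-- componentwise semilinear map on pi types induced by a ring hom -/
private def piSemilinear {L K : Type*} [Semiring L] [Semiring K] (f : L →+* K)
    (m : Type*) : (m → L) →ₛₗ[f] (m → K) where
  toFun x := f ∘ x
  map_add' x y := funext fun i => map_add f _ _
  map_smul' c x := funext fun i => map_mul f _ _

private lemma rank_map_field {L K : Type*} [Field L] [Field K] (f : L →+* K)
    {m q : Type*} [Fintype m] [Fintype q] (M : Matrix m q L) :
    (M.map f).rank = M.rank := by
  classical
  rw [Matrix.rank_eq_finrank_span_cols, Matrix.rank_eq_finrank_span_cols]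
  set s : Set (m → L) := Set.range Mᵀ with hs
  set F := piSemilinear f m with hF
  have himg : F '' s = Set.range (M.map f)ᵀ := by
    rw [hs]
    exact (Set.range_comp _ _).symm
  obtain ⟨b, hbs, hsp, hli⟩ := exists_linearIndependent L s
  have hbfin : b.Finite := (Set.finite_range Mᵀ).subset hbs
  haveI : Fintype b := hbfin.fintype
  have key : ∀ x ∈ span L b, F x ∈ span K (F '' b) := by
    intro x hx
    induction hx using Submodule.span_induction with
    | mem y hy => exact subset_span (Set.mem_image_of_mem _ hy)
    | zero => rw [map_zero]; exact zero_mem _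
    | add y z _ _ hy hz => rw [map_add]; exact add_mem hy hz
    | smul c y _ hy =>
      rw [LinearMap.map_smulₛₗ]
      exact Submodule.smul_mem _ _ hy
  have hspan : span K (Set.range (M.map f)ᵀ) = span K (F '' b) := by
    refine le_antisymm (span_le.2 ?_) (span_mono ?_)
    · rw [← himg]
      rintro - ⟨y, hy, rfl⟩
      exact key y (hsp ▸ subset_span hy)
    · rw [← himg]
      exact Set.image_mono hbs
  have hliK : LinearIndependent K (fun x : b => (F x : m → K)) :=
    li_map_field f hli
  have h1 : finrank K ↥(span K (Set.range (M.map f)ᵀ)) = Fintype.card b := by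
    rw [hspan, Set.image_eq_range]
    exact finrank_span_eq_card hliK
  have h2 : finrank L ↥(span L s) = Fintype.card b := by
    rw [← hsp, finrank_span_set_eq_card hli, Set.toFinset_card]
  exact h1.trans h2.symm

private lemma rank_map_fractionRing {R K : Type u} [CommRing R] [IsDomain R] [Field K]
    [Algebra R K] [IsFractionRing R K] {m q : Type u} [Fintype m] [Fintype q]
    (M : Matrix m q R) : (M.map (algebraMap R K)).rank = M.rank := by
  classical
  rw [Matrix.rank_eq_finrank_span_cols, Matrix.rank_eq_finrank_span_cols]
  set s : Set (m → R) := Set.range Mᵀ with hs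
  set F : (m → R) →ₗ[R] (m → K) := LinearMap.compLeft (Algebra.linearMap R K) m with hF
  have hFinj : Function.Injective F := by
    intro x y hxy
    funext i
    exact IsFractionRing.injective R K (congrFun hxy i)
  have himg : F '' s = Set.range (M.map (algebraMap R K))ᵀ := by
    rw [hs]
    exact (Set.range_comp _ _).symm
  -- choose a basis of the K-span among the image columns
  obtain ⟨b', hb's, hsp, hli⟩ := exists_linearIndependent K (F '' s)
  have hb'fin : b'.Finite := ((Set.finite_range Mᵀ).image _).subset hb's
  haveI : Fintype b' := hb'fin.fintype
  -- K-side
  have h1 : finrank K ↥(span K (Set.range (M.map (algebraMap R K))ᵀ)) = b'.toFinset.card := by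
    rw [← himg, ← hsp, finrank_span_set_eq_card hli]
  -- R-side: rank of span R s equals #b' as well
  -- b' is linearly independent over R
  have hliR : LinearIndependent R (Subtype.val : b' → (m → K)) :=
    (LinearIndependent.iff_fractionRing R K).2 hli
  -- pull back b' through F
  have hb'sub : ∀ x : b', ∃ y : m → R, y ∈ s ∧ F y = x := by
    rintro ⟨x, hx⟩
    obtain ⟨y, hy, rfl⟩ := hb's hx
    exact ⟨y, hy, rfl⟩
  choose g hgs hgF using hb'sub
  have hgi : LinearIndependent R g := by
    apply LinearIndependent.of_comp F
    have : ⇑F ∘ g = Subtype.val := funext fun x => hgF x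
    rw [this]
    exact hliR
  -- lower bound
  have hgle : Cardinal.mk b' ≤ Module.rank R ↥(span R s) := by
    have hginto : ∀ x : b', g x ∈ span R s := fun x => subset_span (hgs x)
    have : LinearIndependent R (fun x : b' => (⟨g x, hginto x⟩ : ↥(span R s))) := by
      apply LinearIndependent.of_comp (span R s).subtype
      exact hgi
    exact this.cardinal_le_rank
  -- upper bound
  have hgge : Module.rank R ↥(span R s) ≤ Cardinal.mk b' := by
    have e1 : Module.rank R ↥(span R s) = Module.rank R ↥(Submodule.map F (span R s)) :=
      (Submodule.equivMapOfInjective F hFinj (span R s)).rank_eq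
    have e2 : Submodule.map F (span R s) ≤
        Submodule.restrictScalars R (span K (F '' s)) := by
      rw [Submodule.map_span]
      exact span_le.2 fun x hx => subset_span hx
    have e3 : Module.rank R ↥(Submodule.restrictScalars R (span K (F '' s)))
        = Module.rank K ↥(span K (F '' s)) := by
      haveI := isLocalizedModule_id (nonZeroDivisors R) ↥(span K (F '' s)) K
      exact (IsLocalization.rank_eq (S := K) (p := nonZeroDivisors R) (hp := le_rfl)
        (N := ↥(span K (F '' s)))).symm
    have e4 : Module.rank K ↥(span K (F '' s)) = Cardinal.mk b' := by
      rw [← hsp]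
      exact rank_span_set hli
    calc Module.rank R ↥(span R s) = Module.rank R ↥(Submodule.map F (span R s)) := e1
      _ ≤ Module.rank R ↥(Submodule.restrictScalars R (span K (F '' s))) :=
          Submodule.rank_mono e2
      _ = Cardinal.mk b' := by rw [e3, e4]
  have h2 : finrank R ↥(span R s) = b'.toFinset.card := by
    have : Module.rank R ↥(span R s) = Cardinal.mk b' := le_antisymm hgge hgle
    rw [finrank, this, Cardinal.mk_fintype, Set.toFinset_card]
    simp
  exact h1.trans h2.symm

theorem stmt_9 (n q : ℕ) (v : Fin q → (Fin n →₀ ℕ))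
    (Θ : Matrix (Fin q) (Fin n) (MvPolynomial (Fin n) ℤ))
    (hΘ : ∀ j i, Θ j i = pderiv i (monomial (v j) (1 : ℤ)))
    (A : Matrix (Fin n) (Fin q) ℤ) (hA : ∀ i j, A i j = ((v j) i : ℤ)) :
    (∀ (s : ℕ) (a : Fin s → Fin q) (b : Fin s → Fin n),
      ((Matrix.of fun p r : Fin s => Θ (a p) (b r)).det = 0 ↔
        (Matrix.of fun p r : Fin s => A (b p) (a r)).det = 0)) ∧
    Θ.rank = A.rank := by
  classical
  -- the key entry identity
  have key : ∀ (j : Fin q) (i : Fin n),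
      X i * Θ j i = monomial (v j) (1 : ℤ) * C ((v j) i : ℤ) := by
    intro j i
    rw [hΘ, pderiv_monomial]
    by_cases h : (v j) i = 0
    · simp [h]
    · have hle : Finsupp.single i 1 ≤ v j := by
        rwa [Finsupp.single_le_iff, Nat.one_le_iff_ne_zero]
      rw [X, monomial_mul, add_tsub_cancel_of_le hle, ← monomial_zero', monomial_mul, add_zero]
      simp
  constructor
  · intro s a b
    set Tm : Matrix (Fin s) (Fin s) (MvPolynomial (Fin n) ℤ) :=
      Matrix.of fun p r : Fin s => Θ (a p) (b r) with hTm
    set Am : Matrix (Fin s) (Fin s) ℤ :=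
      Matrix.of fun p r : Fin s => A (b p) (a r) with hAm
    set M0 : Matrix (Fin s) (Fin s) ℤ :=
      Matrix.of fun p r : Fin s => ((v (a p)) (b r) : ℤ) with hM0
    have hM0Am : M0.det = Am.det := by
      have : M0 = Amᵀ := by
        ext p r
        simp [hM0, hAm, Matrix.transpose_apply, hA]
      rw [this, Matrix.det_transpose]
    have h1 : (Matrix.of fun p r : Fin s => X (b r) * Tm p r)
        = Matrix.of fun p r : Fin s => monomial (v (a p)) (1 : ℤ) * C ((v (a p)) (b r) : ℤ) :=
      Matrix.ext fun p r => key (a p) (b r)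
    have h2 := Matrix.det_mul_row (fun r => (X (b r) : MvPolynomial (Fin n) ℤ)) Tm
    have h3 := Matrix.det_mul_column (fun p => (monomial (v (a p)) (1 : ℤ)))
      (Matrix.of fun p r : Fin s => C ((v (a p)) (b r) : ℤ))
    simp only [Matrix.of_apply] at h3
    have h4 : (Matrix.of fun p r : Fin s => (C ((v (a p)) (b r) : ℤ) :
        MvPolynomial (Fin n) ℤ)).det = C M0.det := by
      rw [RingHom.map_det]
      rfl
    have heq : (∏ r, (X (b r) : MvPolynomial (Fin n) ℤ)) * Tm.det
        = (∏ p, (monomial (v (a p)) (1 : ℤ))) * C Am.det := by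
      rw [← h2, h1, h3, h4, hM0Am]
    have hP : (∏ r, (X (b r) : MvPolynomial (Fin n) ℤ)) ≠ 0 :=
      Finset.prod_ne_zero_iff.2 fun _ _ => X_ne_zero _
    have hQ : (∏ p, (monomial (v (a p)) (1 : ℤ)) : MvPolynomial (Fin n) ℤ) ≠ 0 :=
      Finset.prod_ne_zero_iff.2 fun _ _ => by simp [monomial_eq_zero]
    constructor
    · intro h
      have : (∏ p, (monomial (v (a p)) (1 : ℤ))) * C Am.det = 0 := by
        rw [← heq, h, mul_zero]
      rcases mul_eq_zero.1 this with h' | h'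
      · exact absurd h' hQ
      · exact C_eq_zero.1 h'
    · intro h
      have : (∏ r, (X (b r) : MvPolynomial (Fin n) ℤ)) * Tm.det = 0 := by
        rw [heq, h, map_zero, mul_zero]
      rcases mul_eq_zero.1 this with h' | h'
      · exact absurd h' hP
      · exact h'
  · -- rank part
    let R := MvPolynomial (Fin n) ℤ
    let K := FractionRing R
    haveI : CharZero K := charZero_of_injective_algebraMap (IsFractionRing.injective R K)
    set φ : R →+* K := algebraMap R K with hφ
    set ψ : ℤ →+* K := Int.castRingHom K with hψ
    have hφinj : Function.Injective φ := IsFractionRing.injective R K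
    have hphiX : ∀ i : Fin n, φ (X i) ≠ 0 := fun i => by
      rw [← map_zero φ]
      exact fun h => X_ne_zero i (hφinj h)
    have hphiM : ∀ j : Fin q, φ (monomial (v j) (1 : ℤ)) ≠ 0 := fun j => by
      rw [← map_zero φ]
      exact fun h => (by simp [monomial_eq_zero] : (monomial (v j) (1:ℤ)) ≠ 0) (hφinj h)
    have hCψ : ∀ z : ℤ, φ (C z) = ψ z := fun z =>
      RingHom.congr_fun (Subsingleton.elim (φ.comp MvPolynomial.C) ψ) z
    have hfact : Θ.map φ = (Matrix.diagonal fun j : Fin q => φ (monomial (v j) (1 : ℤ))) *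
        ((A.map ψ)ᵀ * Matrix.diagonal fun i : Fin n => (φ (X i))⁻¹) := by
      ext j i
      rw [Matrix.diagonal_mul, Matrix.mul_diagonal, Matrix.transpose_apply, Matrix.map_apply,
        Matrix.map_apply]
      have hk : φ (X i) * φ (Θ j i) = φ (monomial (v j) (1 : ℤ)) * ψ (A i j) := by
        rw [← _root_.map_mul, key j i, _root_.map_mul, hCψ, hA]
      rw [← mul_assoc, ← div_eq_mul_inv, eq_div_iff (hphiX i), mul_comm (φ (Θ j i)) (φ (X i)), hk]
    have hD : IsUnit (Matrix.diagonal fun j : Fin q => φ (monomial (v j) (1 : ℤ))).det := by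
      rw [Matrix.det_diagonal]
      exact (Finset.prod_ne_zero_iff.2 fun j _ => hphiM j).isUnit
    have hE : IsUnit (Matrix.diagonal fun i : Fin n => (φ (X i))⁻¹).det := by
      rw [Matrix.det_diagonal]
      exact (Finset.prod_ne_zero_iff.2 fun i _ => inv_ne_zero (hphiX i)).isUnit
    have r1 : Θ.rank = (Θ.map φ).rank := (rank_map_fractionRing Θ).symm
    have r2 : (Θ.map φ).rank
        = ((A.map ψ)ᵀ * Matrix.diagonal fun i : Fin n => (φ (X i))⁻¹).rank := by
      rw [hfact]
      exact Matrix.rank_mul_eq_right_of_isUnit_det _ _ hD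
    have r3 : ((A.map ψ)ᵀ * Matrix.diagonal fun i : Fin n => (φ (X i))⁻¹).rank
        = (A.map ψ)ᵀ.rank := Matrix.rank_mul_eq_left_of_isUnit_det _ _ hE
    have r4 : (A.map ψ)ᵀ.rank = (A.map ψ).rank := Matrix.rank_transpose _
    have r5 : (A.map ψ).rank = A.rank := by
      have hcomp : A.map ψ = (A.map (algebraMap ℤ ℚ)).map (Rat.castHom K) := by
        ext i j
        simp [hψ, Matrix.map_apply, eq_intCast, Rat.cast_intCast]
      rw [hcomp, rank_map_field, rank_map_fractionRing]
    rw [r1, r2, r3, r4, r5]
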